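/- Every complex root z of the polynomial P(T) satisfies |z| = √3. -/

import Mathlib

open Polynomial

/-- The Weil polynomial `P(T) = Q₁(J(X)/𝔽₃, T)` of the intermediate Jacobian of the
cubic threefold `X` of the paper over `𝔽₃`. -/
noncomputable def weilP : Polynomial ℤ :=
  X ^ 10 - 6 * X ^ 9 + 15 * X ^ 8 - 10 * X ^ 7 - 41 * X ^ 6 + 125 * X ^ 5
    - 123 * X ^ 4 - 90 * X ^ 3 + 405 * X ^ 2 - 486 * X + 243


noncomputable def qf : ℝ → ℝ := fun x => x^5 - 6*x^4 + 62*x^2 - 131*x + 77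

lemma qf_cont : Continuous qf := by unfold qf; continuity

lemma qf_root_of_le (a b : ℝ) (hab : a ≤ b) (ha : qf a ≤ 0) (hb : 0 ≤ qf b) :
    ∃ r ∈ Set.Icc a b, qf r = 0 := by
  obtain ⟨r, hr, hr0⟩ := intermediate_value_Icc hab qf_cont.continuousOn ⟨ha, hb⟩
  exact ⟨r, hr, hr0⟩

lemma qf_root_of_ge (a b : ℝ) (hab : a ≤ b) (ha : 0 ≤ qf a) (hb : qf b ≤ 0) :
    ∃ r ∈ Set.Icc a b, qf r = 0 := by
  obtain ⟨r, hr, hr0⟩ := intermediate_value_Icc' hab qf_cont.continuousOn ⟨hb, ha⟩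
  exact ⟨r, hr, hr0⟩

lemma five_roots : ∃ r1 r2 r3 r4 r5 : ℝ,
    qf r1 = 0 ∧ qf r2 = 0 ∧ qf r3 = 0 ∧ qf r4 = 0 ∧ qf r5 = 0 ∧
    r1 < r2 ∧ r2 < r3 ∧ r3 < r4 ∧ r4 < r5 ∧
    (∀ r ∈ ({r1, r2, r3, r4, r5} : Set ℝ), -69/20 ≤ r ∧ r ≤ 69/20) := by
  obtain ⟨r1, h1i, h1⟩ := qf_root_of_le (-69/20) 0 (by norm_num) (by unfold qf; norm_num) (by unfold qf; norm_num)
  obtain ⟨r2, h2i, h2⟩ := qf_root_of_ge 0 2 (by norm_num) (by unfold qf; norm_num) (by unfold qf; norm_num)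
  obtain ⟨r3, h3i, h3⟩ := qf_root_of_le 2 (5/2) (by norm_num) (by unfold qf; norm_num) (by unfold qf; norm_num)
  obtain ⟨r4, h4i, h4⟩ := qf_root_of_ge (5/2) 3 (by norm_num) (by unfold qf; norm_num) (by unfold qf; norm_num)
  obtain ⟨r5, h5i, h5⟩ := qf_root_of_le 3 (69/20) (by norm_num) (by unfold qf; norm_num) (by unfold qf; norm_num)
  have e0 : qf 0 ≠ 0 := by unfold qf; norm_num
  have e2 : qf 2 ≠ 0 := by unfold qf; norm_num
  have e52 : qf (5/2) ≠ 0 := by unfold qf; norm_num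
  have e3 : qf 3 ≠ 0 := by unfold qf; norm_num
  have l1 : r1 < 0 := lt_of_le_of_ne h1i.2 (fun h => e0 (h ▸ h1))
  have l2 : r2 < 2 := lt_of_le_of_ne h2i.2 (fun h => e2 (h ▸ h2))
  have l3 : r3 < 5/2 := lt_of_le_of_ne h3i.2 (fun h => e52 (h ▸ h3))
  have l4 : r4 < 3 := lt_of_le_of_ne h4i.2 (fun h => e3 (h ▸ h4))
  refine ⟨r1, r2, r3, r4, r5, h1, h2, h3, h4, h5,
    lt_of_lt_of_le l1 h2i.1, lt_of_lt_of_le l2 h3i.1,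
    lt_of_lt_of_le l3 h4i.1, lt_of_lt_of_le l4 h5i.1, ?_⟩
  rintro r (rfl | rfl | rfl | rfl | rfl)
  · exact ⟨h1i.1, by linarith [h1i.2]⟩
  · exact ⟨by linarith [h2i.1], by linarith [h2i.2]⟩
  · exact ⟨by linarith [h3i.1], by linarith [h3i.2]⟩
  · exact ⟨by linarith [h4i.1], by linarith [h4i.2]⟩
  · exact ⟨by linarith [h5i.1], h5i.2⟩

lemma s_real (s : ℂ) (hs : s^5 - 6*s^4 + 62*s^2 - 131*s + 77 = 0) :
    ∃ r : ℝ, s = (r : ℂ) ∧ r^2 < 12 := by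
  obtain ⟨r1, r2, r3, r4, r5, h1, h2, h3, h4, h5, l12, l23, l34, l45, hbd⟩ := five_roots
  set q : ℂ[X] := X^5 - 6*X^4 + 62*X^2 - 131*X + 77 with hq
  have hdeg : q.natDegree = 5 := by unfold q; compute_degree!
  have hq0 : q ≠ 0 := fun h => by simp [h] at hdeg
  have hroot : ∀ x : ℝ, qf x = 0 → (↑x : ℂ) ∈ q.roots := by
    intro x hx
    rw [mem_roots hq0]
    unfold qf at hx
    have hc : ((x:ℂ)^5 - 6*(x:ℂ)^4 + 62*(x:ℂ)^2 - 131*(x:ℂ) + 77) = 0 := by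
      exact_mod_cast congrArg (fun t : ℝ => (t : ℂ)) hx
    simp only [IsRoot, hq, eval_add, eval_sub, eval_mul, eval_pow, eval_X, eval_ofNat]
    linear_combination hc
  have hsroot : s ∈ q.roots := by
    rw [mem_roots hq0]
    simp only [IsRoot, hq, eval_add, eval_sub, eval_mul, eval_pow, eval_X, eval_ofNat]
    linear_combination hs
  have hmem : s = (r1:ℂ) ∨ s = r2 ∨ s = r3 ∨ s = r4 ∨ s = r5 := by
    by_contra hne
    push_neg at hne
    obtain ⟨n1, n2, n3, n4, n5⟩ := hne
    have l13 := l12.trans l23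
    have l14 := l13.trans l34
    have l15 := l14.trans l45
    have l24 := l23.trans l34
    have l25 := l24.trans l45
    have l35 := l34.trans l45
    have c12 : (r1:ℂ) ≠ r2 := by exact_mod_cast ne_of_lt l12
    have c13 : (r1:ℂ) ≠ r3 := by exact_mod_cast ne_of_lt l13
    have c14 : (r1:ℂ) ≠ r4 := by exact_mod_cast ne_of_lt l14
    have c15 : (r1:ℂ) ≠ r5 := by exact_mod_cast ne_of_lt l15
    have c23 : (r2:ℂ) ≠ r3 := by exact_mod_cast ne_of_lt l23
    have c24 : (r2:ℂ) ≠ r4 := by exact_mod_cast ne_of_lt l24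
    have c25 : (r2:ℂ) ≠ r5 := by exact_mod_cast ne_of_lt l25
    have c34 : (r3:ℂ) ≠ r4 := by exact_mod_cast ne_of_lt l34
    have c35 : (r3:ℂ) ≠ r5 := by exact_mod_cast ne_of_lt l35
    have c45 : (r4:ℂ) ≠ r5 := by exact_mod_cast ne_of_lt l45
    set S : Finset ℂ := {s, (r1:ℂ), (r2:ℂ), (r3:ℂ), (r4:ℂ), (r5:ℂ)} with hS
    have hsub : S ⊆ q.roots.toFinset := by
      intro a ha
      simp only [hS, Finset.mem_insert, Finset.mem_singleton] at ha
      rw [Multiset.mem_toFinset]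
      rcases ha with rfl | rfl | rfl | rfl | rfl | rfl
      · exact hsroot
      · exact hroot r1 h1
      · exact hroot r2 h2
      · exact hroot r3 h3
      · exact hroot r4 h4
      · exact hroot r5 h5
    have hcard : S.card = 6 := by
      rw [hS]
      rw [Finset.card_insert_of_notMem (by
        simp only [Finset.mem_insert, Finset.mem_singleton]; push_neg
        exact ⟨n1, n2, n3, n4, n5⟩)]
      rw [Finset.card_insert_of_notMem (by
        simp only [Finset.mem_insert, Finset.mem_singleton]; push_neg
        exact ⟨c12, c13, c14, c15⟩)]
      rw [Finset.card_insert_of_notMem (by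
        simp only [Finset.mem_insert, Finset.mem_singleton]; push_neg
        exact ⟨c23, c24, c25⟩)]
      rw [Finset.card_insert_of_notMem (by
        simp only [Finset.mem_insert, Finset.mem_singleton]; push_neg
        exact ⟨c34, c35⟩)]
      rw [Finset.card_insert_of_notMem (by
        simp only [Finset.mem_singleton]; exact c45)]
      simp
    have hle := Finset.card_le_card hsub
    have h2' := Multiset.toFinset_card_le q.roots
    have h3' := Polynomial.card_roots' q
    rw [hcard] at hle
    rw [hdeg] at h3'
    omega
  rcases hmem with rfl | rfl | rfl | rfl | rfl <;>
  · refine ⟨_, rfl, ?_⟩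
    first
    | (obtain ⟨hl, hr⟩ := hbd r1 (by simp); nlinarith)
    | (obtain ⟨hl, hr⟩ := hbd r2 (by simp); nlinarith)
    | (obtain ⟨hl, hr⟩ := hbd r3 (by simp); nlinarith)
    | (obtain ⟨hl, hr⟩ := hbd r4 (by simp); nlinarith)
    | (obtain ⟨hl, hr⟩ := hbd r5 (by simp); nlinarith)

/-- Every complex root `z` of `P(T)` satisfies `|z| = √3`. -/
theorem weilP_roots_abs :
    ∀ z : ℂ, Polynomial.aeval z weilP = 0 → ‖z‖ = Real.sqrt 3 := by
  intro z hz
  have hz' : z^10 - 6*z^9 + 15*z^8 - 10*z^7 - 41*z^6 + 125*z^5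
      - 123*z^4 - 90*z^3 + 405*z^2 - 486*z + 243 = 0 := by
    have := hz
    simp only [weilP, map_add, map_sub, map_mul, map_pow, map_ofNat, aeval_X,
      map_intCast] at this
    linear_combination this
  have hz0 : z ≠ 0 := by
    intro h
    rw [h] at hz'
    norm_num at hz'
  have h5 : z^5 ≠ 0 := pow_ne_zero _ hz0
  have hqs : (z + 3/z)^5 - 6*(z + 3/z)^4 + 62*(z + 3/z)^2 - 131*(z + 3/z) + 77 = 0 := by
    have key : ((z + 3/z)^5 - 6*(z + 3/z)^4 + 62*(z + 3/z)^2 - 131*(z + 3/z) + 77) * z^5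
        = z^10 - 6*z^9 + 15*z^8 - 10*z^7 - 41*z^6 + 125*z^5
          - 123*z^4 - 90*z^3 + 405*z^2 - 486*z + 243 := by
      field_simp [hz0]
      ring
    rw [hz'] at key
    exact (mul_eq_zero.mp key).resolve_right h5
  obtain ⟨r, hsr, hr12⟩ := s_real _ hqs
  have hquad : z^2 - (r:ℂ)*z + 3 = 0 := by
    have hm : z * (z + 3/z) = z * (r:ℂ) := by rw [hsr]
    have hz3 : z * (z + 3/z) = z^2 + 3 := by field_simp
    rw [hz3] at hm
    linear_combination hm
  have hconj : (starRingEnd ℂ z)^2 - (r:ℂ) * (starRingEnd ℂ z) + 3 = 0 := by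
    have := congrArg (starRingEnd ℂ) hquad
    simpa [map_sub, map_add, map_mul, map_pow, map_ofNat, Complex.conj_ofReal] using this
  have hfact : (z - starRingEnd ℂ z) * (z + starRingEnd ℂ z - (r:ℂ)) = 0 := by
    linear_combination hquad - hconj
  rcases mul_eq_zero.mp hfact with hcase | hcase
  · -- z real: contradiction with discriminant
    have hzr : z = (z.re : ℂ) := by
      have him : z.im = 0 := by
        have := sub_eq_zero.mp hcase
        have := congrArg Complex.im this
        simp [Complex.conj_im] at this
        linarith
      exact (Complex.ext_iff.mpr ⟨by simp, by simp [him]⟩)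
    rw [hzr] at hquad
    have hre : (z.re)^2 - r * z.re + 3 = 0 := by exact_mod_cast hquad
    nlinarith [sq_nonneg (2*z.re - r)]
  · have h2 : z + starRingEnd ℂ z = (r:ℂ) := by linear_combination hcase
    have h3 : z * starRingEnd ℂ z = 3 := by
      linear_combination z * h2 - hquad
    have hns : (Complex.normSq z : ℂ) = 3 := by rw [← Complex.mul_conj]; exact h3
    have hns' : Complex.normSq z = 3 := by exact_mod_cast hns
    rw [Complex.norm_def, hns']
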